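/- Let μ, ν be reals with μ + ν = 1 and 0 < ν < 1/2 < μ, let n ≥ 4 be a real, let Δ ≥ 1 be a natural number, and let ε₁ be a constant with 0 < ε₁ < 1. Suppose p > 0 satisfies p·n ≤ ε₁·ln(μ/ν) / ((ln(μ/ν) + 1)·μ). Then for every real δ₅ > ε₁·ln(μ/ν) / (1 + (1-ε₁)·ln(μ/ν)) and for δ₁ := (1+δ₅)·(1 - ε₁·ln(μ/ν)/(ln(μ/ν)+1)) - 1, one has δ₅ > 0, δ₁ > 0, and ((1+δ₁)/(1 - p·μ·n))^(1/(2Δ)) ≤ 1 + δ₅/(2Δ). -/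

import Mathlib

open Real

theorem stmt_1 (μ ν n p ε₁ : ℝ) (Δ : ℕ)
    (hμν : μ + ν = 1) (hν0 : 0 < ν) (hν : ν < 1/2) (hμ : 1/2 < μ)
    (hn : 4 ≤ n) (hΔ : 1 ≤ Δ) (hε₁ : 0 < ε₁) (hε₁' : ε₁ < 1)
    (hp : 0 < p)
    (hpn : p * n ≤ ε₁ * Real.log (μ / ν) / ((Real.log (μ / ν) + 1) * μ)) :
    ∀ δ₅ : ℝ, δ₅ > ε₁ * Real.log (μ / ν) / (1 + (1 - ε₁) * Real.log (μ / ν)) →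
      0 < δ₅ ∧
      0 < (1 + δ₅) * (1 - ε₁ * Real.log (μ / ν) / (Real.log (μ / ν) + 1)) - 1 ∧
      ((1 + ((1 + δ₅) * (1 - ε₁ * Real.log (μ / ν) / (Real.log (μ / ν) + 1)) - 1))
          / (1 - p * μ * n)) ^ (1 / (2 * (Δ : ℝ)))
        ≤ 1 + δ₅ / (2 * (Δ : ℝ)) := by
  intro δ₅ hδ
  set L := Real.log (μ / ν) with hLdef
  have hμ0 : 0 < μ := by linarith
  have hL : 0 < L := Real.log_pos (by rw [lt_div_iff₀ hν0]; linarith)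
  have hL1 : 0 < L + 1 := by linarith
  set A := ε₁ * L / (L + 1) with hAdef
  have hA0 : 0 < A := by positivity
  have hA1 : A < 1 := by
    rw [hAdef, div_lt_one hL1]
    nlinarith
  -- denominator in hδ
  have hden : 0 < 1 + (1 - ε₁) * L := by nlinarith
  have hδA : δ₅ * (1 - A) > A := by
    have h1 : ε₁ * L / (1 + (1 - ε₁) * L) < δ₅ := hδ
    rw [div_lt_iff₀ hden] at h1
    have h2 : 1 - A = (1 + (1 - ε₁) * L) / (L + 1) := by
      rw [hAdef, eq_div_iff hL1.ne', sub_mul, div_mul_cancel₀ _ hL1.ne']; ring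
    rw [hAdef, h2, gt_iff_lt, div_lt_iff₀ hL1]
    calc ε₁ * L < δ₅ * (1 + (1 - ε₁) * L) := h1
      _ = δ₅ * ((1 + (1 - ε₁) * L) / (L + 1)) * (L + 1) := by field_simp
  have hδ5 : 0 < δ₅ := by nlinarith
  have hδ1 : 0 < (1 + δ₅) * (1 - A) - 1 := by nlinarith
  refine ⟨hδ5, hδ1, ?_⟩
  -- p μ n ≤ A
  have hpμn : p * μ * n ≤ A := by
    have : p * n * μ ≤ ε₁ * L / ((L + 1) * μ) * μ := by
      exact mul_le_mul_of_nonneg_right hpn hμ0.le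
    have h2 : ε₁ * L / ((L + 1) * μ) * μ = A := by
      rw [hAdef, div_mul_eq_mul_div, mul_div_mul_right _ _ hμ0.ne']
    nlinarith [this]
  have hpos : 0 < 1 - p * μ * n := by linarith
  -- base ≤ 1 + δ₅
  have hbase : (1 + ((1 + δ₅) * (1 - A) - 1)) / (1 - p * μ * n) ≤ 1 + δ₅ := by
    rw [div_le_iff₀ hpos]
    have : (1 + δ₅) * (1 - A) ≤ (1 + δ₅) * (1 - p * μ * n) := by
      apply mul_le_mul_of_nonneg_left (by linarith) (by linarith)
    linarith
  have hΔ' : (1 : ℝ) ≤ (Δ : ℝ) := by exact_mod_cast hΔ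
  have h2Δ : 0 < 2 * (Δ : ℝ) := by linarith
  have hexp0 : 0 < 1 / (2 * (Δ : ℝ)) := by positivity
  have hexp1 : 1 / (2 * (Δ : ℝ)) ≤ 1 := by
    rw [div_le_one h2Δ]; linarith
  have hbase0 : 0 ≤ (1 + ((1 + δ₅) * (1 - A) - 1)) / (1 - p * μ * n) := by
    apply div_nonneg (by linarith) hpos.le
  calc ((1 + ((1 + δ₅) * (1 - A) - 1)) / (1 - p * μ * n)) ^ (1 / (2 * (Δ : ℝ)))
      ≤ (1 + δ₅) ^ (1 / (2 * (Δ : ℝ))) :=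
        Real.rpow_le_rpow hbase0 hbase hexp0.le
    _ ≤ 1 + 1 / (2 * (Δ : ℝ)) * δ₅ :=
        rpow_one_add_le_one_add_mul_self (by linarith) hexp0.le hexp1
    _ = 1 + δ₅ / (2 * (Δ : ℝ)) := by ring
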